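/- For η > 1 and s_e > 0, the integral ∫_1^∞ (π/2 + u/r) · s_e r/(s_e + r^η) dr equals (π s_e)/(2(η−2)) · ₂F₁(1, (η−2)/η; (2η−2)/η; −s_e) + u·s_e^{1/η}·(π/η)/sin(π/η) − u·₂F₁(1, 1/η; (η+1)/η; −1/s_e), for η > 2. -/

import Mathlib

open MeasureTheory Real

/-- The Gauss hypergeometric function ₂F₁(a,b;c;z), defined through Euler's integral
representation (valid for c > b > 0 and z ∉ [1,∞), in particular for all z ≤ 0). -/
noncomputable def hyp2F1 (a b c z : ℝ) : ℝ :=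
  (Real.Gamma c / (Real.Gamma b * Real.Gamma (c - b))) *
    ∫ t in Set.Ioo (0:ℝ) 1, t ^ (b - 1) * (1 - t) ^ (c - b - 1) * (1 - z * t) ^ (-a)

open Set

lemma beta_reflect {a : ℝ} (h0 : 0 < a) (h1 : a < 1) :
    ∫ t in Ioo (0:ℝ) 1, t ^ (a-1) * (1-t) ^ (-a) = π / Real.sin (π * a) := by
  have key : ((∫ t in Ioo (0:ℝ) 1, t ^ (a-1) * (1-t) ^ (-a) : ℝ) : ℂ)
      = Complex.betaIntegral a (1 - a) := by
    rw [Complex.betaIntegral, intervalIntegral.integral_of_le zero_le_one,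
      integral_Ioc_eq_integral_Ioo]
    rw [show ((∫ t in Ioo (0:ℝ) 1, t ^ (a-1) * (1-t) ^ (-a) : ℝ) : ℂ)
      = ∫ t in Ioo (0:ℝ) 1, ((t ^ (a-1) * (1-t) ^ (-a) : ℝ) : ℂ) from integral_ofReal.symm]
    refine setIntegral_congr_fun measurableSet_Ioo (fun t ht => ?_)
    have h0t : (0:ℝ) ≤ t := ht.1.le
    have h1t : (0:ℝ) ≤ 1 - t := by linarith [ht.2]
    push_cast
    rw [Complex.ofReal_cpow h0t, Complex.ofReal_cpow h1t]
    push_cast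
    ring_nf
  have hG : Complex.betaIntegral a (1 - a) = ((π / Real.sin (π * a) : ℝ) : ℂ) := by
    have := Complex.Gamma_mul_Gamma_eq_betaIntegral (s := (a:ℂ)) (t := (1 - (a:ℂ)))
      (by simpa using h0) (by simp [Complex.sub_re]; linarith)
    rw [show ((a:ℂ) + (1 - (a:ℂ))) = 1 by ring, Complex.Gamma_one, one_mul] at this
    rw [← this, show (1 - (a:ℂ)) = ((1-a : ℝ) : ℂ) by push_cast; ring,
      Complex.Gamma_ofReal, Complex.Gamma_ofReal, ← Complex.ofReal_mul,
      Real.Gamma_mul_Gamma_one_sub]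
  exact_mod_cast key.trans hG

lemma mellin_reflect {a : ℝ} (h0 : 0 < a) (h1 : a < 1) :
    ∫ y in Ioi (0:ℝ), y ^ (a-1) * (1+y)⁻¹ = π / Real.sin (π * a) := by
  have himg : (fun t : ℝ => t/(1-t)) '' Ioo 0 1 = Ioi 0 := by
    ext y; constructor
    · rintro ⟨t, ht, rfl⟩
      exact div_pos ht.1 (by linarith [ht.2])
    · intro hy
      refine ⟨y / (1 + y), ⟨div_pos hy (by linarith [mem_Ioi.mp hy]), ?_⟩, ?_⟩
      · rw [div_lt_one (by linarith [mem_Ioi.mp hy])]; linarith [mem_Ioi.mp hy]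
      · have h1y : (1:ℝ) + y ≠ 0 := by have := mem_Ioi.mp hy; positivity
        field_simp
        ring
  have hder : ∀ t ∈ Ioo (0:ℝ) 1, HasDerivWithinAt (fun t : ℝ => t/(1-t))
      (((1-t)^2)⁻¹) (Ioo 0 1) t := by
    intro t ht
    have h1t : (1:ℝ) - t ≠ 0 := by have := ht.2; intro h; linarith [sub_eq_zero.mp h]
    have := (hasDerivAt_id t).div ((hasDerivAt_id t).const_sub 1) h1t
    refine (this.congr_deriv ?_).hasDerivWithinAt
    simp only [id_eq]
    ring
  have hinj : InjOn (fun t : ℝ => t/(1-t)) (Ioo 0 1) := by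
    intro x hx y hy h
    have hx1 : (1:ℝ) - x ≠ 0 := by have := hx.2; intro hc; linarith [sub_eq_zero.mp hc]
    have hy1 : (1:ℝ) - y ≠ 0 := by have := hy.2; intro hc; linarith [sub_eq_zero.mp hc]
    field_simp at h
    nlinarith [h]
  rw [← himg, integral_image_eq_integral_abs_deriv_smul measurableSet_Ioo hder hinj,
    ← beta_reflect h0 h1]
  refine setIntegral_congr_fun measurableSet_Ioo (fun t ht => ?_)
  have h1t : (0:ℝ) < 1 - t := by linarith [ht.2]
  have habs : |((1-t)^2)⁻¹| = ((1-t)^2)⁻¹ := abs_of_pos (by positivity)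
  have e1 : (1:ℝ) + t/(1-t) = (1-t)⁻¹ := by field_simp; ring
  have e2 : (t/(1-t)) ^ (a-1) = t ^ (a-1) * (1-t) ^ (1-a) := by
    rw [div_rpow ht.1.le h1t.le, div_eq_mul_inv, ← Real.rpow_neg h1t.le, neg_sub]
  simp only [smul_eq_mul, habs, e1, e2, inv_inv]
  have e3 : (1-t) ^ (-a) = (1-t) ^ (1-a) * (1-t) * ((1-t)^2)⁻¹ := by
    rw [show ((1-t):ℝ)^2 = (1-t)^(2:ℝ) by rw [Real.rpow_two],
      ← Real.rpow_neg h1t.le, ← Real.rpow_add_one h1t.ne', ← Real.rpow_add h1t]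
    ring_nf
  rw [e3]; ring

lemma hyp_aux {b z : ℝ} (hb : 0 < b) :
    hyp2F1 1 b (b+1) z = b * ∫ t in Ioo (0:ℝ) 1, t ^ (b-1) * (1 - z*t)⁻¹ := by
  unfold hyp2F1
  have h1 : ∀ t : ℝ, t ^ (b-1) * (1-t) ^ (b+1-b-1) * (1 - z*t) ^ (-(1:ℝ))
      = t ^ (b-1) * (1 - z*t)⁻¹ := fun t => by
    rw [show b+1-b-1 = (0:ℝ) by ring, Real.rpow_zero, mul_one, Real.rpow_neg_one]
  simp_rw [h1]
  rw [Real.Gamma_add_one hb.ne', show b+1-b = (1:ℝ) by ring, Real.Gamma_one]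
  field_simp [(Real.Gamma_pos_of_pos hb).ne']

lemma sub_Ioi {η : ℝ} (hη0 : 0 < η) (g : ℝ → ℝ) :
    ∫ t in Ioo (0:ℝ) 1, g t = ∫ r in Ioi (1:ℝ), (η * r ^ (-η-1)) * g (r ^ (-η)) := by
  have himg : (fun r : ℝ => r ^ (-η)) '' Ioi 1 = Ioo 0 1 := by
    ext t; constructor
    · rintro ⟨r, hr, rfl⟩
      exact ⟨rpow_pos_of_pos (lt_trans one_pos hr) _,
        rpow_lt_one_of_one_lt_of_neg hr (by linarith)⟩
    · rintro ⟨ht0, ht1⟩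
      refine ⟨t ^ (-η⁻¹), ?_, ?_⟩
      · rw [mem_Ioi, Real.one_lt_rpow_iff_of_pos ht0]
        right; exact ⟨ht1, neg_lt_zero.mpr (inv_pos.mpr hη0)⟩
      · show (t ^ (-η⁻¹)) ^ (-η) = t
        rw [← Real.rpow_mul ht0.le, show -η⁻¹ * -η = 1 by field_simp, Real.rpow_one]
  have hder : ∀ r ∈ Ioi (1:ℝ), HasDerivWithinAt (fun r : ℝ => r ^ (-η))
      ((-η) * r ^ (-η-1)) (Ioi 1) r := fun r hr =>
    (Real.hasDerivAt_rpow_const (Or.inl (ne_of_gt (lt_trans one_pos hr)))).hasDerivWithinAt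
  have hinj : InjOn (fun r : ℝ => r ^ (-η)) (Ioi 1) := by
    intro x hx y hy h
    have hx0 : (0:ℝ) < x := lt_trans one_pos hx
    have hy0 : (0:ℝ) < y := lt_trans one_pos hy
    have := congrArg (· ^ (-η)⁻¹) h
    simpa [← Real.rpow_mul hx0.le, ← Real.rpow_mul hy0.le,
      mul_inv_cancel₀ (show -η ≠ 0 by intro hc; rw [neg_eq_zero] at hc; exact hη0.ne' hc),
      mul_inv_cancel₀ hη0.ne']
      using this
  rw [← himg, integral_image_eq_integral_abs_deriv_smul measurableSet_Ioi hder hinj]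
  refine setIntegral_congr_fun measurableSet_Ioi fun r hr => ?_
  have hr0 : (0:ℝ) < r := lt_trans one_pos hr
  rw [smul_eq_mul, abs_mul, abs_neg, abs_of_pos hη0,
    abs_of_pos (rpow_pos_of_pos hr0 _)]

lemma sub_Ioo {η : ℝ} (hη0 : 0 < η) (g : ℝ → ℝ) :
    ∫ t in Ioo (0:ℝ) 1, g t = ∫ r in Ioo (0:ℝ) 1, (η * r ^ (η-1)) * g (r ^ η) := by
  have himg : (fun r : ℝ => r ^ η) '' Ioo 0 1 = Ioo 0 1 := by
    ext t; constructor
    · rintro ⟨r, hr, rfl⟩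
      exact ⟨rpow_pos_of_pos hr.1 _, Real.rpow_lt_one hr.1.le hr.2 hη0⟩
    · rintro ⟨ht0, ht1⟩
      refine ⟨t ^ η⁻¹, ⟨rpow_pos_of_pos ht0 _, Real.rpow_lt_one ht0.le ht1 (inv_pos.mpr hη0)⟩, ?_⟩
      show (t ^ η⁻¹) ^ η = t
      rw [← Real.rpow_mul ht0.le, inv_mul_cancel₀ hη0.ne', Real.rpow_one]
  have hder : ∀ r ∈ Ioo (0:ℝ) 1, HasDerivWithinAt (fun r : ℝ => r ^ η)
      (η * r ^ (η-1)) (Ioo 0 1) r := fun r hr =>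
    (Real.hasDerivAt_rpow_const (Or.inl hr.1.ne')).hasDerivWithinAt
  have hinj : InjOn (fun r : ℝ => r ^ η) (Ioo 0 1) := by
    intro x hx y hy h
    have := congrArg (· ^ η⁻¹) h
    simpa [← Real.rpow_mul hx.1.le, ← Real.rpow_mul hy.1.le,
      mul_inv_cancel₀ hη0.ne'] using this
  conv_lhs => rw [← himg]
  rw [integral_image_eq_integral_abs_deriv_smul measurableSet_Ioo hder hinj]
  refine setIntegral_congr_fun measurableSet_Ioo fun r hr => ?_
  rw [smul_eq_mul, abs_mul, abs_of_pos hη0, abs_of_pos (rpow_pos_of_pos hr.1 _)]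

/-- ∫_1^∞ (π/2 + u/r) · s_e r/(s_e + r^η) dr
  = (π s_e)/(2(η−2)) ₂F₁(1,(η−2)/η;(2η−2)/η;−s_e)
    + u s_e^{1/η} (π/η)/sin(π/η) − u ₂F₁(1,1/η;(η+1)/η;−1/s_e),  for η > 2, s_e > 0. -/
theorem I1_closed_form (η se u : ℝ) (hη : 2 < η) (hse : 0 < se) (hu : 0 ≤ u) :
    ∫ r in Set.Ioi (1:ℝ), (π / 2 + u / r) * (se * r / (se + r ^ η))
      = (π * se) / (2 * (η - 2)) * hyp2F1 1 ((η - 2)/η) ((2*η - 2)/η) (-se)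
        + u * se ^ (1/η) * ((π/η) / Real.sin (π/η))
        - u * hyp2F1 1 (1/η) ((η + 1)/η) (-(1/se)) := by
  have hη0 : (0:ℝ) < η := by linarith
  have hηne : η ≠ 0 := hη0.ne'
  have hne2 : η - 2 ≠ 0 := by intro h; linarith [sub_eq_zero.mp h]
  have hD : ∀ r : ℝ, 0 < r → 0 < se + r ^ η := fun r hr => by positivity
  have hcont : ∀ s : Set ℝ, (∀ r ∈ s, (0:ℝ) < r) →
      ContinuousOn (fun r : ℝ => se + r ^ η) s := fun s hs =>
    continuousOn_const.add (ContinuousOn.rpow_const continuousOn_id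
      (fun r hr => Or.inl (hs r hr).ne'))
  have hmeas : ∀ (s : Set ℝ), MeasurableSet s → (∀ r ∈ s, (0:ℝ) < r) → ∀ c : ℝ → ℝ,
      ContinuousOn c s → AEStronglyMeasurable (fun r : ℝ => c r / (se + r ^ η))
        (volume.restrict s) := fun s hsm hs c hc =>
    (hc.div (hcont s hs) (fun r hr => (hD r (hs r hr)).ne')).aestronglyMeasurable hsm
  have hioi : ∀ r : ℝ, r ∈ Ioi (1:ℝ) → (0:ℝ) < r := fun r hr => lt_trans one_pos hr
  have int1 : IntegrableOn (fun r : ℝ => se * r / (se + r ^ η)) (Ioi 1) := by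
    refine Integrable.mono'
      ((integrableOn_Ioi_rpow_of_lt (show 1 - η < -1 by linarith) one_pos).const_mul se)
      (hmeas _ measurableSet_Ioi hioi _ (continuousOn_const.mul continuousOn_id)) ?_
    rw [ae_restrict_iff' measurableSet_Ioi]
    refine ae_of_all _ fun r hr => ?_
    have hr0 : (0:ℝ) < r := hioi r hr
    have hRpos : (0:ℝ) < r ^ η := rpow_pos_of_pos hr0 η
    rw [Real.norm_eq_abs, abs_of_nonneg (by positivity)]
    calc se * r / (se + r ^ η) ≤ se * r / r ^ η := by
          apply div_le_div_of_nonneg_left (by positivity) hRpos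
          linarith
      _ = se * r ^ (1-η) := by
          rw [Real.rpow_sub hr0, Real.rpow_one, mul_div_assoc]
  have int2 : IntegrableOn (fun r : ℝ => se / (se + r ^ η)) (Ioi 1) := by
    refine Integrable.mono'
      ((integrableOn_Ioi_rpow_of_lt (show -η < -1 by linarith) one_pos).const_mul se)
      (hmeas _ measurableSet_Ioi hioi _ continuousOn_const) ?_
    rw [ae_restrict_iff' measurableSet_Ioi]
    refine ae_of_all _ fun r hr => ?_
    have hr0 : (0:ℝ) < r := hioi r hr
    have hRpos : (0:ℝ) < r ^ η := rpow_pos_of_pos hr0 η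
    rw [Real.norm_eq_abs, abs_of_nonneg (by positivity)]
    calc se / (se + r ^ η) ≤ se / r ^ η := by
          apply div_le_div_of_nonneg_left hse.le hRpos
          linarith
      _ = se * r ^ (-η) := by rw [Real.rpow_neg hr0.le, div_eq_mul_inv]
  have int3 : IntegrableOn (fun r : ℝ => se / (se + r ^ η)) (Ioc 0 1) := by
    refine Integrable.mono' (g := fun _ => (1:ℝ)) (integrableOn_const measure_Ioc_lt_top.ne)
      (hmeas _ measurableSet_Ioc (fun r hr => hr.1) _ continuousOn_const) ?_
    rw [ae_restrict_iff' measurableSet_Ioc]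
    refine ae_of_all _ fun r hr => ?_
    rw [Real.norm_eq_abs, abs_of_nonneg (div_pos hse (hD r hr.1)).le]
    rw [div_le_one (hD r hr.1)]
    have : (0:ℝ) ≤ r ^ η := (rpow_pos_of_pos hr.1 η).le
    linarith
  set N1 : ℝ := ∫ r in Ioi (1:ℝ), r / (se + r ^ η) with hN1
  set IB : ℝ := ∫ r in Ioi (1:ℝ), se / (se + r ^ η) with hIB
  set P : ℝ := ∫ r in Ioo (0:ℝ) 1, se / (se + r ^ η) with hP
  -- Step 1
  have step1 : ∫ r in Set.Ioi (1:ℝ), (π / 2 + u / r) * (se * r / (se + r ^ η))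
      = π / 2 * (se * N1) + u * IB := by
    rw [show ∫ r in Set.Ioi (1:ℝ), (π / 2 + u / r) * (se * r / (se + r ^ η))
        = ∫ r in Ioi (1:ℝ), (π / 2 * (se * r / (se + r ^ η)) + u * (se / (se + r ^ η)))
        from setIntegral_congr_fun measurableSet_Ioi fun r hr => by
          have hr0 : (0:ℝ) < r := hioi r hr
          have hD' := (hD r hr0).ne'
          field_simp]
    rw [integral_add (int1.const_mul (π/2)) (int2.const_mul u),
      MeasureTheory.integral_const_mul, MeasureTheory.integral_const_mul]
    congr 2
    rw [hN1, ← MeasureTheory.integral_const_mul]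
    exact setIntegral_congr_fun measurableSet_Ioi fun r hr => mul_div_assoc _ _ _
  -- Step 2
  have step2 : (π * se) / (2 * (η - 2)) * hyp2F1 1 ((η - 2)/η) ((2*η - 2)/η) (-se)
      = π / 2 * (se * N1) := by
    rw [show (2*η - 2)/η = (η - 2)/η + 1 by field_simp; ring,
      hyp_aux (div_pos (by linarith) hη0)]
    rw [sub_Ioi hη0 (fun t => t ^ ((η - 2)/η - 1) * (1 - (-se) * t)⁻¹)]
    rw [show ∫ r in Ioi (1:ℝ), (η * r ^ (-η-1)) *
          ((fun t => t ^ ((η - 2)/η - 1) * (1 - (-se) * t)⁻¹) (r ^ (-η)))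
        = ∫ r in Ioi (1:ℝ), η * (r / (se + r ^ η))
        from setIntegral_congr_fun measurableSet_Ioi fun r hr => by
          have hr0 : (0:ℝ) < r := hioi r hr
          have hR : (0:ℝ) < r ^ η := rpow_pos_of_pos hr0 η
          have hDr : (0:ℝ) < se + r ^ η := hD r hr0
          simp only
          have e1 : (r ^ (-η)) ^ ((η - 2)/η - 1) = r * r := by
            rw [← Real.rpow_mul hr0.le, show -η * ((η - 2)/η - 1) = 2 by field_simp; ring,
              show (2:ℝ) = ((2:ℕ):ℝ) by norm_num, Real.rpow_natCast]
            ring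
          have e2 : r ^ (-η) = (r ^ η)⁻¹ := Real.rpow_neg hr0.le η
          have e3 : r ^ (-η-1) = (r ^ η)⁻¹ * r⁻¹ := by
            rw [show -η-1 = -η + (-1) by ring, Real.rpow_add hr0, Real.rpow_neg_one, e2]
          rw [e1, e3, e2]
          rw [show (1 - -se * (r ^ η)⁻¹) = (se + r ^ η) / r ^ η by field_simp; ring]
          rw [inv_div]
          field_simp]
    rw [MeasureTheory.integral_const_mul, ← hN1]
    field_simp
  -- Step 3
  have step3 : hyp2F1 1 (1/η) ((η + 1)/η) (-(1/se)) = P := by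
    rw [show (η + 1)/η = 1/η + 1 by field_simp; ring,
      hyp_aux (div_pos one_pos hη0)]
    rw [sub_Ioo hη0 (fun t => t ^ (1/η - 1) * (1 - (-(1/se)) * t)⁻¹)]
    rw [show ∫ r in Ioo (0:ℝ) 1, (η * r ^ (η-1)) *
          ((fun t => t ^ (1/η - 1) * (1 - (-(1/se)) * t)⁻¹) (r ^ η))
        = ∫ r in Ioo (0:ℝ) 1, η * (se / (se + r ^ η))
        from setIntegral_congr_fun measurableSet_Ioo fun r hr => by
          have hr0 : (0:ℝ) < r := hr.1
          have hR : (0:ℝ) < r ^ η := rpow_pos_of_pos hr0 η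
          have hDr : (0:ℝ) < se + r ^ η := hD r hr0
          simp only
          have e1 : (r ^ η) ^ (1/η - 1) = (r ^ (η - 1))⁻¹ := by
            rw [← Real.rpow_mul hr0.le, show η * (1/η - 1) = -(η-1) by field_simp; ring,
              Real.rpow_neg hr0.le]
          have hR1 : (0:ℝ) < r ^ (η-1) := rpow_pos_of_pos hr0 _
          rw [e1, show (1 - -(1/se) * r ^ η) = (se + r ^ η) / se by field_simp; ring, inv_div,
            show η * r ^ (η-1) * ((r ^ (η-1))⁻¹ * (se / (se + r ^ η)))
              = η * (r ^ (η-1) * (r ^ (η-1))⁻¹) * (se / (se + r ^ η)) by ring,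
            mul_inv_cancel₀ hR1.ne', mul_one]]
    rw [MeasureTheory.integral_const_mul, ← hP]
    field_simp
  -- Step 4
  have hsin : (0:ℝ) < Real.sin (π/η) := by
    apply Real.sin_pos_of_pos_of_lt_pi (by positivity)
    rw [div_lt_iff₀ hη0]
    nlinarith [Real.pi_pos]
  have hL : (∫ x in Ioi (0:ℝ), (1 + x ^ η)⁻¹) = (π/η) / Real.sin (π/η) := by
    have hmr := mellin_reflect (a := 1/η) (by positivity) (by
      rw [div_lt_one hη0]; linarith)
    have hsub := integral_comp_rpow_Ioi_of_pos
      (g := fun y : ℝ => y ^ (1/η - 1) * (1 + y)⁻¹) hη0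
    rw [show ∫ x in Ioi (0:ℝ), (η * x ^ (η-1)) • ((fun y : ℝ => y ^ (1/η - 1) * (1 + y)⁻¹) (x ^ η))
        = ∫ x in Ioi (0:ℝ), η * (1 + x ^ η)⁻¹
        from setIntegral_congr_fun measurableSet_Ioi fun x hx => by
          have hx0 : (0:ℝ) < x := hx
          simp only [smul_eq_mul]
          have e1 : (x ^ η) ^ (1/η - 1) = (x ^ (η - 1))⁻¹ := by
            rw [← Real.rpow_mul hx0.le, show η * (1/η - 1) = -(η-1) by field_simp; ring,
              Real.rpow_neg hx0.le]
          have hR1 : (0:ℝ) < x ^ (η-1) := rpow_pos_of_pos hx0 _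
          rw [e1, show η * x ^ (η-1) * ((x ^ (η-1))⁻¹ * (1 + x ^ η)⁻¹)
              = η * (x ^ (η-1) * (x ^ (η-1))⁻¹) * (1 + x ^ η)⁻¹ by ring,
            mul_inv_cancel₀ hR1.ne', mul_one], hmr,
      MeasureTheory.integral_const_mul, show π * (1/η) = π/η by ring] at hsub
    rw [show (π/η) / Real.sin (π/η) = (π / Real.sin (π/η)) / η by
        rw [div_div, div_div, mul_comm]]
    rw [eq_div_iff hηne, mul_comm]
    exact hsub
  have hK : (∫ r in Ioi (0:ℝ), se / (se + r ^ η))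
      = se ^ (1/η) * ((π/η) / Real.sin (π/η)) := by
    have hb : (0:ℝ) < se ^ (1/η) := rpow_pos_of_pos hse _
    have hscale := integral_comp_mul_left_Ioi (fun y : ℝ => se / (se + y ^ η)) 0 hb
    rw [mul_zero] at hscale
    simp only [smul_eq_mul] at hscale
    rw [show ∫ x in Ioi (0:ℝ), se / (se + (se ^ (1/η) * x) ^ η)
        = ∫ x in Ioi (0:ℝ), (1 + x ^ η)⁻¹
        from setIntegral_congr_fun measurableSet_Ioi fun x hx => by
          have hx0 : (0:ℝ) < x := hx
          rw [Real.mul_rpow (rpow_pos_of_pos hse _).le hx0.le, ← Real.rpow_mul hse.le,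
            one_div, inv_mul_cancel₀ hηne, Real.rpow_one,
            show se + se * x ^ η = se * (1 + x ^ η) by ring,
            div_mul_eq_div_div, div_self hse.ne', one_div], hL] at hscale
    rw [hscale, ← mul_assoc, mul_inv_cancel₀ hb.ne', one_mul]
  have step4 : u * se ^ (1/η) * ((π/η) / Real.sin (π/η)) = u * (P + IB) := by
    rw [mul_assoc]
    congr 1
    rw [← hK, ← Ioc_union_Ioi_eq_Ioi (zero_le_one : (0:ℝ) ≤ 1),
      setIntegral_union (Ioc_disjoint_Ioi le_rfl) measurableSet_Ioi int3 int2,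
      integral_Ioc_eq_integral_Ioo, ← hP, ← hIB]
  rw [step1, step2, step3, step4]
  ring
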